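/- If R is a ring such that for every ideal 𝔞 of R and every n the matrix ring M(n, R/𝔞) is Dedekind finite, then for every net σ over R, the net subgroup satisfies G(σ) = GL(n,R) ∩ (e + M(σ)); i.e., every invertible matrix of the form e + m with m ∈ M(σ) has its inverse also of this form. -/

import Mathlib

private lemma aux_flip {S : Type*} [Ring S]
    (hDF : ∀ x y : S, x * y = 1 → y * x = 1)
    (a G B : S) (haa : a * a = a)
    (h0 : (1 - a) * G * a = 0) (hGB : G * B = 1) (hBG : B * G = 1) :
    (1 - a) * B * a = 0 := by
  have h1 : a * (G * a) = G * a := by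
    have h : G * a - a * (G * a) = 0 := by
      calc G * a - a * (G * a) = (1 - a) * G * a := by noncomm_ring
      _ = 0 := h0
    have := sub_eq_zero.mp h
    exact this.symm
  have h2 : B * (G * a) = a := by rw [← mul_assoc, hBG, one_mul]
  have e1 : a * B * a * (G * a) = a := by
    calc a * B * a * (G * a) = a * B * (a * (G * a)) := by rw [mul_assoc]
    _ = a * B * (G * a) := by rw [h1]
    _ = a * (B * (G * a)) := by rw [mul_assoc]
    _ = a * a := by rw [h2]
    _ = a := haa
  have hXV : a * B * a * (1 - a) = 0 := by
    have h : a * B * a * a = a * B * a := by rw [mul_assoc, haa]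
    rw [mul_sub, mul_one, h, sub_self]
  have hYU : (1 - a) * (G * a) = 0 := by rw [← mul_assoc]; exact h0
  have hYV : (1 - a) * (1 - a) = 1 - a := by
    rw [sub_mul, one_mul, mul_sub, mul_one, haa, sub_self, sub_zero]
  have hTD : (a * B * a + (1 - a)) * (G * a + (1 - a)) = 1 := by
    rw [add_mul, mul_add, mul_add, e1, hXV, hYU, hYV]
    abel
  have hDT := hDF _ _ hTD
  have hX'V' : G * a * (1 - a) = 0 := by
    have h : G * a * a = G * a := by rw [mul_assoc, haa]
    rw [mul_sub, mul_one, h, sub_self]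
  have hY'U' : (1 - a) * (a * B * a) = 0 := by
    have h : (1 - a) * a = 0 := by rw [sub_mul, one_mul, haa, sub_self]
    calc (1 - a) * (a * B * a) = (1 - a) * a * B * a := by rw [← mul_assoc, ← mul_assoc]
    _ = 0 := by rw [h, zero_mul, zero_mul]
  have h4 : G * a * (a * B * a) = a := by
    have expand : G * a * (a * B * a) + (1 - a) = 1 := by
      calc G * a * (a * B * a) + (1 - a)
          = G * a * (a * B * a) + (G * a * (1 - a) + ((1 - a) * (a * B * a) + (1 - a) * (1 - a))) := by
            rw [hX'V', hY'U', hYV]; abel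
      _ = (G * a + (1 - a)) * (a * B * a + (1 - a)) := by rw [add_mul, mul_add, mul_add]; abel
      _ = 1 := hDT
    have h' := eq_sub_of_add_eq expand
    rwa [sub_sub_cancel] at h'
  have h5 : B * a = a * (B * a) := by
    calc B * a = B * (G * a * (a * B * a)) := by rw [h4]
    _ = B * (G * a) * (a * B * a) := by simp only [mul_assoc]
    _ = a * (a * B * a) := by rw [h2]
    _ = a * a * (B * a) := by simp only [mul_assoc]
    _ = a * (B * a) := by rw [haa]
  calc (1 - a) * B * a = (1 - a) * (B * a) := by rw [mul_assoc]
  _ = B * a - a * (B * a) := by rw [sub_mul, one_mul]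
  _ = 0 := by rw [← h5, sub_self]

private lemma aux_block {R : Type*} [Ring R] {n : ℕ}
    (𝔪 : TwoSidedIdeal R)
    (hDF : ∀ (x y : Matrix (Fin n) (Fin n) 𝔪.ringCon.Quotient), x * y = 1 → y * x = 1)
    (g b : Matrix (Fin n) (Fin n) R) (hgb : g * b = 1) (hbg : b * g = 1)
    (J : Fin n → Prop) (hblock : ∀ p q, ¬ J p → J q → g p q ∈ 𝔪) :
    ∀ p q, ¬ J p → J q → b p q ∈ 𝔪 := by
  classical
  set T := 𝔪.ringCon.Quotient with hT
  let φ : R →+* T := 𝔪.ringCon.mk'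
  have hker : ∀ z : R, z ∈ 𝔪 ↔ φ z = 0 := by
    intro z
    rw [show (0 : T) = φ 0 from (map_zero φ).symm]
    show z ∈ 𝔪 ↔ (z : T) = ((0 : R) : T)
    rw [RingCon.eq]
    exact 𝔪.mem_iff z
  set G : Matrix (Fin n) (Fin n) T := φ.mapMatrix g with hG
  set B : Matrix (Fin n) (Fin n) T := φ.mapMatrix b with hB
  have hGB : G * B = 1 := by rw [hG, hB, ← map_mul, hgb, map_one]
  have hBG : B * G = 1 := by rw [hG, hB, ← map_mul, hbg, map_one]
  set a : Matrix (Fin n) (Fin n) T := Matrix.diagonal (fun q => if J q then 1 else 0) with ha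
  have haa : a * a = a := by
    rw [ha, Matrix.diagonal_mul_diagonal]
    ext p q
    by_cases h : J p <;> simp [Matrix.diagonal_apply, h]
  have hcompl : (1 : Matrix (Fin n) (Fin n) T) - a
      = Matrix.diagonal (fun q => if J q then 0 else 1) := by
    rw [ha]
    ext p q
    rcases eq_or_ne p q with rfl | hpq
    · by_cases h : J p <;>
        simp [Matrix.sub_apply, Matrix.one_apply, Matrix.diagonal_apply, h]
    · simp [Matrix.sub_apply, Matrix.one_apply, Matrix.diagonal_apply, hpq]
  have hGpq0 : ∀ p q, ¬ J p → J q → G p q = 0 := by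
    intro p q hp hq
    have : φ (g p q) = 0 := (hker _).mp (hblock p q hp hq)
    rw [hG, RingHom.mapMatrix_apply, Matrix.map_apply, this]
  have h0 : (1 - a) * G * a = 0 := by
    ext p q
    rw [hcompl, ha, Matrix.mul_diagonal, Matrix.diagonal_mul, Matrix.zero_apply]
    by_cases hq : J q
    · by_cases hp : J p
      · simp [hp]
      · rw [hGpq0 p q hp hq]; simp
    · simp [hq]
  have key : (1 - a) * B * a = 0 := aux_flip hDF a G B haa h0 hGB hBG
  intro p q hp hq
  have hent : ((1 - a) * B * a) p q = B p q := by
    rw [hcompl, ha, Matrix.mul_diagonal, Matrix.diagonal_mul]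
    simp [hp, hq]
  rw [hker]
  have hz : B p q = 0 := by rw [← hent, key, Matrix.zero_apply]
  rw [hB, RingHom.mapMatrix_apply, Matrix.map_apply] at hz
  exact hz


private lemma aux_chain_bound {R : Type*} [Ring R] (c : Set (TwoSidedIdeal R))
    (hchain : IsChain (· ≤ ·) c) {ι : Type*} (s : Finset ι) (f : ι → TwoSidedIdeal R)
    (hf : ∀ x ∈ s, f x ∈ c) (y0 : TwoSidedIdeal R) (hy0 : y0 ∈ c) :
    ∃ 𝔟 ∈ c, ∀ x ∈ s, f x ≤ 𝔟 := by
  classical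
  induction s using Finset.induction_on with
  | empty => exact ⟨y0, hy0, by simp⟩
  | @insert a t ha ih =>
    obtain ⟨𝔟, h𝔟c, h𝔟⟩ := ih (fun x hx => hf x (Finset.mem_insert_of_mem hx))
    have hfa : f a ∈ c := hf a (Finset.mem_insert_self a t)
    rcases eq_or_ne (f a) 𝔟 with heq | hne
    · exact ⟨𝔟, h𝔟c, fun x hx => by
        rcases Finset.mem_insert.mp hx with rfl | hx
        · exact heq.le
        · exact h𝔟 x hx⟩
    · rcases hchain hfa h𝔟c hne with h | h
      · exact ⟨𝔟, h𝔟c, fun x hx => by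
          rcases Finset.mem_insert.mp hx with rfl | hx
          · exact h
          · exact h𝔟 x hx⟩
      · exact ⟨f a, hfa, fun x hx => by
          rcases Finset.mem_insert.mp hx with rfl | hx
          · exact le_rfl
          · exact (h𝔟 x hx).trans h⟩

private lemma aux_zorn {R : Type*} [Ring R] (Bad : Set (TwoSidedIdeal R))
    (hBad : ∀ (c : Set (TwoSidedIdeal R)), c ⊆ Bad → IsChain (· ≤ ·) c →
      ∀ y0 ∈ c, ∀ (U : TwoSidedIdeal R), (∀ z, z ∈ U ↔ ∃ 𝔞 ∈ c, z ∈ 𝔞) → U ∈ Bad)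
    (hbot : ⊥ ∈ Bad) : ∃ 𝔪, 𝔪 ∈ Bad ∧ ∀ 𝔞, 𝔞 ∈ Bad → 𝔪 ≤ 𝔞 → 𝔞 ≤ 𝔪 := by
  obtain ⟨𝔪, -, hmax⟩ := zorn_le_nonempty₀ Bad (fun c hsub hchain y0 hy0 => by
    classical
    refine ⟨TwoSidedIdeal.mk' {z | ∃ 𝔞 ∈ c, z ∈ 𝔞}
      ⟨y0, hy0, TwoSidedIdeal.zero_mem _⟩
      (fun {x y} hx hy => by
        obtain ⟨𝔞, h𝔞, hx⟩ := hx
        obtain ⟨𝔟, h𝔟, hy⟩ := hy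
        rcases eq_or_ne 𝔞 𝔟 with rfl | hne
        · exact ⟨𝔞, h𝔞, 𝔞.add_mem hx hy⟩
        · rcases hchain h𝔞 h𝔟 hne with h | h
          · exact ⟨𝔟, h𝔟, 𝔟.add_mem (h hx) hy⟩
          · exact ⟨𝔞, h𝔞, 𝔞.add_mem hx (h hy)⟩)
      (fun {x} hx => by
        obtain ⟨𝔞, h𝔞, hx⟩ := hx
        exact ⟨𝔞, h𝔞, 𝔞.neg_mem hx⟩)
      (fun {x y} hy => by
        obtain ⟨𝔞, h𝔞, hy⟩ := hy
        exact ⟨𝔞, h𝔞, 𝔞.mul_mem_left _ _ hy⟩)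
      (fun {x y} hx => by
        obtain ⟨𝔞, h𝔞, hx⟩ := hx
        exact ⟨𝔞, h𝔞, 𝔞.mul_mem_right _ _ hx⟩), ?_, ?_⟩
    · exact hBad c hsub hchain y0 hy0 _ (fun z => TwoSidedIdeal.mem_mk' _ _ _ _ _ _ z)
    · intro 𝔞 h𝔞 z hz
      exact (TwoSidedIdeal.mem_mk' _ _ _ _ _ _ z).mpr ⟨𝔞, h𝔞, hz⟩) ⊥ hbot
  exact ⟨𝔪, hmax.1, fun 𝔞 h1 h2 => hmax.2 h1 h2⟩


private lemma aux_sum_mul {R : Type*} [Ring R] {n : ℕ}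
    (g b : Matrix (Fin n) (Fin n) R) (hbg : b * g = 1) (u : Fin n → R) (i : Fin n) :
    ∑ p, b i p * (∑ q, g p q * u q) = u i := by
  classical
  calc ∑ p, b i p * (∑ q, g p q * u q) = ∑ p, ∑ q, b i p * (g p q * u q) := by
        apply Finset.sum_congr rfl
        intro p _
        rw [Finset.mul_sum]
  _ = ∑ q, ∑ p, b i p * (g p q * u q) := Finset.sum_comm
  _ = ∑ q, (∑ p, b i p * g p q) * u q := by
        apply Finset.sum_congr rfl
        intro q _
        rw [Finset.sum_mul]
        apply Finset.sum_congr rfl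
        intro p _
        rw [mul_assoc]
  _ = ∑ q, (1 : Matrix (Fin n) (Fin n) R) i q * u q := by
        apply Finset.sum_congr rfl
        intro q _
        rw [← Matrix.mul_apply, hbg]
  _ = u i := by
        simp [Matrix.one_apply]

private lemma aux_row {R : Type*} [Ring R] {n : ℕ}
    (g b : Matrix (Fin n) (Fin n) R) (hgb : g * b = 1) (p w : Fin n) :
    ∑ q, g p q * (b q w - (1 : Matrix (Fin n) (Fin n) R) q w)
      = (1 : Matrix (Fin n) (Fin n) R) p w - g p w := by
  classical
  have h1 : ∑ q, g p q * b q w = (1 : Matrix (Fin n) (Fin n) R) p w := by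
    rw [← Matrix.mul_apply, hgb]
  have h2 : ∑ q, g p q * (1 : Matrix (Fin n) (Fin n) R) q w = g p w := by
    rw [← Matrix.mul_apply, mul_one]
  calc ∑ q, g p q * (b q w - (1 : Matrix (Fin n) (Fin n) R) q w)
      = ∑ q, (g p q * b q w - g p q * (1 : Matrix (Fin n) (Fin n) R) q w) := by
        apply Finset.sum_congr rfl
        intro q _
        rw [mul_sub]
  _ = (∑ q, g p q * b q w) - ∑ q, g p q * (1 : Matrix (Fin n) (Fin n) R) q w :=
        Finset.sum_sub_distrib _ _
  _ = (1 : Matrix (Fin n) (Fin n) R) p w - g p w := by rw [h1, h2]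

theorem net_subgroup_eq_cap_of_dedekind_finite
    {R : Type*} [Ring R]
    (hDF : ∀ (𝔞 : TwoSidedIdeal R) (m : ℕ)
      (x y : Matrix (Fin m) (Fin m) 𝔞.ringCon.Quotient), x * y = 1 → y * x = 1)
    {n : ℕ} (σ : Fin n → Fin n → TwoSidedIdeal R)
    (hnet : ∀ i j r : Fin n, ∀ x ∈ σ i r, ∀ y ∈ σ r j, x * y ∈ σ i j)
    (g : (Matrix (Fin n) (Fin n) R)ˣ)
    (hg : ∀ i j, g.val i j - (1 : Matrix (Fin n) (Fin n) R) i j ∈ σ i j) :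
    ∀ i j, (g⁻¹).val i j - (1 : Matrix (Fin n) (Fin n) R) i j ∈ σ i j := by
  classical
  by_contra hcon
  push_neg at hcon
  set b : Matrix (Fin n) (Fin n) R := (g⁻¹).val with hbdef
  have hgb : g.val * b = 1 := g.mul_inv
  have hbg : b * g.val = 1 := g.inv_mul
  set y : Fin n → Fin n → R := fun p q => b p q - (1 : Matrix (Fin n) (Fin n) R) p q with hydef
  obtain ⟨i0, j0, hij0⟩ := hcon
  -- the bad set
  set Bad : Set (TwoSidedIdeal R) :=
    {𝔞 | ¬ ∀ p q, ∃ s ∈ σ p q, y p q - s ∈ 𝔞} with hBadDef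
  have hbot : (⊥ : TwoSidedIdeal R) ∈ Bad := by
    intro hall
    obtain ⟨s, hs, hz⟩ := hall i0 j0
    rw [TwoSidedIdeal.mem_bot, sub_eq_zero] at hz
    have : y i0 j0 ∈ σ i0 j0 := hz ▸ hs
    exact hij0 this
  -- chains of bad ideals have bad upper bounds
  have hchainBad : ∀ (c : Set (TwoSidedIdeal R)), c ⊆ Bad → IsChain (· ≤ ·) c →
      ∀ y0 ∈ c, ∀ (U : TwoSidedIdeal R), (∀ z, z ∈ U ↔ ∃ 𝔞 ∈ c, z ∈ 𝔞) → U ∈ Bad := by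
    intro c hsub hchain y0 hy0 U hU hall
    have hch : ∀ pq : Fin n × Fin n, ∃ 𝔞, 𝔞 ∈ c ∧ ∃ s ∈ σ pq.1 pq.2, y pq.1 pq.2 - s ∈ 𝔞 := by
      intro pq
      obtain ⟨s, hs, hmem⟩ := hall pq.1 pq.2
      obtain ⟨𝔞, h𝔞, h2⟩ := (hU _).mp hmem
      exact ⟨𝔞, h𝔞, s, hs, h2⟩
    choose F hFc hFs using hch
    obtain ⟨𝔟, h𝔟c, hle⟩ := aux_chain_bound c hchain Finset.univ F
      (fun x _ => hFc x) y0 hy0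
    refine hsub h𝔟c ?_
    intro p q
    obtain ⟨s, hs, hmem⟩ := hFs (p, q)
    exact ⟨s, hs, hle (p, q) (Finset.mem_univ _) hmem⟩
  obtain ⟨𝔪, h𝔪bad, hmax⟩ := aux_zorn Bad hchainBad hbot
  have hGood : ∀ 𝔞 : TwoSidedIdeal R, 𝔪 ≤ 𝔞 → ¬ 𝔞 ≤ 𝔪 →
      ∀ p q, ∃ s ∈ σ p q, y p q - s ∈ 𝔞 := by
    intro 𝔞 h1 h2
    by_contra hbad
    exact h2 (hmax 𝔞 hbad h1)
  -- failing pair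
  rw [hBadDef] at h𝔪bad
  simp only [Set.mem_setOf_eq] at h𝔪bad
  push_neg at h𝔪bad
  obtain ⟨i, j, hij⟩ := h𝔪bad
  set c : R := y i j with hcdef
  have hc𝔪 : c ∉ 𝔪 := by
    intro h
    have := hij 0 (TwoSidedIdeal.zero_mem _)
    rw [sub_zero] at this
    exact this h
  have hσij : ∀ s ∈ σ i j, s ∈ 𝔪 := by
    by_contra h
    push_neg at h
    obtain ⟨s₀, hs₀σ, hs₀𝔪⟩ := h
    have h2 : ¬ (𝔪 ⊔ σ i j ≤ 𝔪) := fun hle => hs₀𝔪 (hle (TwoSidedIdeal.mem_sup_right hs₀σ))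
    obtain ⟨s, hs, hmem⟩ := hGood _ le_sup_left h2 i j
    rw [TwoSidedIdeal.mem_sup] at hmem
    obtain ⟨m', hm', t, ht, hsum⟩ := hmem
    refine hij (s + t) ((σ i j).add_mem hs ht) ?_
    have h' : m' + t = c - s := hsum
    have h'' : c - (s + t) = (c - s) - t := by abel
    rw [h'', ← h', add_sub_cancel_right]
    exact hm'
  -- the minimal ideal over 𝔪 generated by c
  obtain ⟨𝔡, h𝔡mem⟩ : ∃ 𝔡 : TwoSidedIdeal R, ∀ z, z ∈ 𝔡 ↔
      (∀ 𝔞 : TwoSidedIdeal R, 𝔪 ≤ 𝔞 → c ∈ 𝔞 → z ∈ 𝔞) := by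
    refine ⟨TwoSidedIdeal.mk' {z | ∀ 𝔞 : TwoSidedIdeal R, 𝔪 ≤ 𝔞 → c ∈ 𝔞 → z ∈ 𝔞}
      (fun 𝔞 _ _ => 𝔞.zero_mem)
      (fun {x y} hx hy 𝔞 h1 h2 => 𝔞.add_mem (hx 𝔞 h1 h2) (hy 𝔞 h1 h2))
      (fun {x} hx 𝔞 h1 h2 => 𝔞.neg_mem (hx 𝔞 h1 h2))
      (fun {x y} hy 𝔞 h1 h2 => 𝔞.mul_mem_left _ _ (hy 𝔞 h1 h2))
      (fun {x y} hx 𝔞 h1 h2 => 𝔞.mul_mem_right _ _ (hx 𝔞 h1 h2)), ?_⟩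
    intro z
    exact TwoSidedIdeal.mem_mk' _ _ _ _ _ _ z
  have hc𝔡 : c ∈ 𝔡 := (h𝔡mem c).mpr (fun 𝔞 _ h => h)
  have h𝔪le𝔡 : 𝔪 ≤ 𝔡 := fun z hz => (h𝔡mem z).mpr (fun 𝔞 h1 _ => h1 hz)
  have h𝔡not : ¬ 𝔡 ≤ 𝔪 := fun h => hc𝔪 (h hc𝔡)
  have hstar : ∀ p q, ∃ s ∈ σ p q, y p q - s ∈ 𝔡 := hGood 𝔡 h𝔪le𝔡 h𝔡not
  have hmono : ∀ 𝔞 : TwoSidedIdeal R, 𝔪 ≤ 𝔞 → ¬ 𝔞 ≤ 𝔪 → 𝔡 ≤ 𝔞 := by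
    intro 𝔞 h1 h2 z hz
    have hc𝔞 : c ∈ 𝔞 := by
      obtain ⟨s, hs, hm⟩ := hGood 𝔞 h1 h2 i j
      have hs𝔞 : s ∈ 𝔞 := h1 (hσij s hs)
      have := 𝔞.add_mem hm hs𝔞
      rwa [sub_add_cancel] at this
    exact (h𝔡mem z).mp hz 𝔞 h1 hc𝔞
  -- the wand
  have hW : ∀ p q, (∀ s ∈ σ p j, s ∈ 𝔪) → (¬ ∀ s ∈ σ q j, s ∈ 𝔪) →
      ∀ ξ ∈ σ p q, ∀ d ∈ 𝔡, ξ * d ∈ 𝔪 := by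
    intro p q hp hq ξ hξ d hd
    push_neg at hq
    obtain ⟨η, hησ, hη𝔪⟩ := hq
    have h2 : ¬ (𝔪 ⊔ σ q j ≤ 𝔪) := fun hle => hη𝔪 (hle (TwoSidedIdeal.mem_sup_right hησ))
    have hd' : d ∈ 𝔪 ⊔ σ q j := hmono _ le_sup_left h2 hd
    rw [TwoSidedIdeal.mem_sup] at hd'
    obtain ⟨m', hm', t, ht, hsum⟩ := hd'
    have heq : ξ * d = ξ * m' + ξ * t := by rw [← hsum, mul_add]
    rw [heq]
    exact 𝔪.add_mem (𝔪.mul_mem_left _ _ hm') (hp _ (hnet p j q ξ hξ t ht))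
  by_cases hB : ∀ d ∈ 𝔡, ∀ d' ∈ 𝔡, d * d' ∈ 𝔪
  · -- CASE B : 𝔡² ⊆ 𝔪
    set K : Fin n → Prop := fun p => ∀ s ∈ σ p j, s ∈ 𝔪 with hKdef
    have hKi : K i := hσij
    have hyK𝔡 : ∀ q, K q → y q j ∈ 𝔡 := by
      intro q hq
      obtain ⟨s, hs, hd⟩ := hstar q j
      have : y q j = (y q j - s) + s := by abel
      rw [this]
      exact 𝔡.add_mem hd (h𝔪le𝔡 (hq s hs))
    set u : Fin n → R := fun q => if K q then y q j else 0 with hudef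
    have hu𝔡 : ∀ q, u q ∈ 𝔡 := by
      intro q
      simp only [hudef]
      by_cases h : K q
      · rw [if_pos h]; exact hyK𝔡 q h
      · rw [if_neg h]; exact 𝔡.zero_mem
    set Gv : Fin n → R := fun p => ∑ q, g.val p q * u q with hGvdef
    have step2 : ∀ p, Gv p ∈ 𝔡 := by
      intro p
      exact 𝔡.finsetSum_mem _ _ (fun q _ => 𝔡.mul_mem_left _ _ (hu𝔡 q))
    have step1 : ∀ p, K p → Gv p ∈ 𝔪 := by
      intro p hKp
      have hsplit : Gv p + ∑ q ∈ Finset.univ.filter (fun q => ¬ K q), g.val p q * y q j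
          = ∑ q, g.val p q * y q j := by
        have hGv : Gv p = ∑ q ∈ Finset.univ.filter K, g.val p q * y q j := by
          simp only [hGvdef, hudef]
          rw [Finset.sum_filter]
          apply Finset.sum_congr rfl
          intro q _
          by_cases h : K q
          · rw [if_pos h, if_pos h]
          · rw [if_neg h, if_neg h, mul_zero]
        rw [hGv]
        exact Finset.sum_filter_add_sum_filter_not _ _ _
      have hrow' : ∑ q, g.val p q * y q j = (1 : Matrix (Fin n) (Fin n) R) p j - g.val p j :=
        aux_row g.val b hgb p j
      have hmem1 : (1 : Matrix (Fin n) (Fin n) R) p j - g.val p j ∈ 𝔪 := by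
        have := hKp _ (hg p j)
        have h' := 𝔪.neg_mem this
        rwa [neg_sub] at h'
      have hmem2 : ∀ q ∈ Finset.univ.filter (fun q => ¬ K q), g.val p q * y q j ∈ 𝔪 := by
        intro q hq
        rw [Finset.mem_filter] at hq
        have hKq : ¬ K q := hq.2
        have hpq : p ≠ q := by rintro rfl; exact hKq hKp
        have hgx : g.val p q = g.val p q - (1 : Matrix (Fin n) (Fin n) R) p q := by
          rw [Matrix.one_apply_ne hpq, sub_zero]
        obtain ⟨s, hs, hd⟩ := hstar q j
        have hdecomp : g.val p q * y q j = g.val p q * s + g.val p q * (y q j - s) := by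
          rw [← mul_add]
          congr 1
          abel
        rw [hdecomp]
        refine 𝔪.add_mem ?_ ?_
        · rw [hgx]
          exact hKp _ (hnet p j q _ (hg p q) s hs)
        · rw [hgx]
          exact hW p q hKp hKq _ (hg p q) _ hd
      have : Gv p = ((1 : Matrix (Fin n) (Fin n) R) p j - g.val p j)
          - ∑ q ∈ Finset.univ.filter (fun q => ¬ K q), g.val p q * y q j := by
        rw [← hrow', ← hsplit]; abel
      rw [this]
      exact 𝔪.sub_mem hmem1 (𝔪.finsetSum_mem _ _ hmem2)
    -- main contradiction
    have hui : u i = c := by simp only [hudef, if_pos hKi, hcdef]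
    have hkey : ∑ p, b i p * Gv p = c := by
      rw [← hui, hGvdef]
      exact aux_sum_mul g.val b hbg u i
    have hc𝔪' : c ∈ 𝔪 := by
      rw [← hkey]
      refine 𝔪.finsetSum_mem _ _ (fun p _ => ?_)
      by_cases hKp : K p
      · exact 𝔪.mul_mem_left _ _ (step1 p hKp)
      · have hip : i ≠ p := by rintro rfl; exact hKp hKi
        have hbip : b i p = y i p := by
          simp only [hydef]
          rw [Matrix.one_apply_ne hip, sub_zero]
        obtain ⟨s, hs, hd⟩ := hstar i p
        have hdecomp : b i p * Gv p = s * Gv p + (y i p - s) * Gv p := by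
          rw [← add_mul, hbip]
          congr 1
          abel
        rw [hdecomp]
        exact 𝔪.add_mem (hW i p hKi hKp s hs _ (step2 p)) (hB _ hd _ (step2 p))
    exact hc𝔪 hc𝔪'
  · -- CASE A
    push_neg at hB
    obtain ⟨d₀, hd₀, d₀', hd₀', hdd⟩ := hB
    have tA : ∀ p q r : Fin n, (¬ ∀ s ∈ σ p q, s ∈ 𝔪) → (¬ ∀ s ∈ σ q r, s ∈ 𝔪) →
        (∀ s ∈ σ p r, s ∈ 𝔪) → False := by
      intro p q r h1 h2 h3
      push_neg at h1 h2
      obtain ⟨η, hη, hη𝔪⟩ := h1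
      obtain ⟨η', hη', hη'𝔪⟩ := h2
      have hm1 : d₀ ∈ 𝔪 ⊔ σ p q := hmono _ le_sup_left
        (fun hle => hη𝔪 (hle (TwoSidedIdeal.mem_sup_right hη))) hd₀
      have hm2 : d₀' ∈ 𝔪 ⊔ σ q r := hmono _ le_sup_left
        (fun hle => hη'𝔪 (hle (TwoSidedIdeal.mem_sup_right hη'))) hd₀'
      rw [TwoSidedIdeal.mem_sup] at hm1 hm2
      obtain ⟨m1, hm1', t1, ht1, hs1⟩ := hm1
      obtain ⟨m2, hm2', t2, ht2, hs2⟩ := hm2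
      refine hdd ?_
      have heq : d₀ * d₀' = m1 * d₀' + (t1 * m2 + t1 * t2) := by
        calc d₀ * d₀' = (m1 + t1) * d₀' := by rw [hs1]
        _ = m1 * d₀' + t1 * (m2 + t2) := by rw [add_mul, hs2]
        _ = m1 * d₀' + (t1 * m2 + t1 * t2) := by rw [mul_add]
      rw [heq]
      refine 𝔪.add_mem (𝔪.mul_mem_right _ _ hm1') (𝔪.add_mem (𝔪.mul_mem_left _ _ hm2')
        (h3 _ (hnet p r q t1 ht1 t2 ht2)))
    set J₀ : Fin n → Prop := fun p => p = j ∨ ¬ ∀ s ∈ σ p j, s ∈ 𝔪 with hJ₀def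
    have hblock : ∀ p q, ¬ J₀ p → J₀ q → g.val p q ∈ 𝔪 := by
      intro p q hp hq
      have hp1 : p ≠ j := fun h => hp (Or.inl h)
      have hp2 : ∀ s ∈ σ p j, s ∈ 𝔪 := by
        by_contra h
        exact hp (Or.inr h)
      have hpq : p ≠ q := by
        rintro rfl
        rcases hq with h | h
        · exact hp1 h
        · exact h hp2
      have hσpq : ∀ s ∈ σ p q, s ∈ 𝔪 := by
        by_contra h'
        rcases hq with rfl | hq2
        · exact h' hp2
        · exact tA p q j h' hq2 hp2
      have hgx : g.val p q = g.val p q - (1 : Matrix (Fin n) (Fin n) R) p q := by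
        rw [Matrix.one_apply_ne hpq, sub_zero]
      rw [hgx]
      exact hσpq _ (hg p q)
    have hbL : ∀ p q, ¬ J₀ p → J₀ q → b p q ∈ 𝔪 :=
      aux_block 𝔪 (hDF 𝔪 n) g.val b hgb hbg J₀ hblock
    by_cases hiJ : J₀ i
    · rcases hiJ with rfl | hnP
      ·
        have hrow' : ∑ q, g.val i q * y q i = (1 : Matrix (Fin n) (Fin n) R) i i - g.val i i :=
          aux_row g.val b hgb i i
        have hsplit : g.val i i * y i i + ∑ q ∈ Finset.univ.erase i, g.val i q * y q i
            = ∑ q, g.val i q * y q i :=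
          Finset.add_sum_erase Finset.univ (fun q => g.val i q * y q i) (Finset.mem_univ i)
        have hgii : g.val i i * y i i
            = (g.val i i - (1 : Matrix (Fin n) (Fin n) R) i i) * c + c := by
          rw [sub_mul, Matrix.one_apply_eq, one_mul, hcdef]
          abel
        have herase : ∀ q ∈ Finset.univ.erase i, g.val i q * y q i ∈ 𝔪 := by
          intro q hq
          have hqi : q ≠ i := Finset.ne_of_mem_erase hq
          by_cases hσiq : ∀ s ∈ σ i q, s ∈ 𝔪
          · have hgx : g.val i q = g.val i q - (1 : Matrix (Fin n) (Fin n) R) i q := by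
              rw [Matrix.one_apply_ne (Ne.symm hqi), sub_zero]
            rw [hgx]
            exact 𝔪.mul_mem_right _ _ (hσiq _ (hg i q))
          · have hqJ : ¬ J₀ q := by
              intro hq'
              rcases hq' with h | h
              · exact hqi h
              · exact tA i q i hσiq h hσij
            have hb𝔪 : b q i ∈ 𝔪 := hbL q i hqJ (Or.inl rfl)
            have hyqi : y q i = b q i := by
              simp only [hydef]
              rw [Matrix.one_apply_ne hqi, sub_zero]
            rw [hyqi]
            exact 𝔪.mul_mem_left _ _ hb𝔪
        have hceq : c = ((1 : Matrix (Fin n) (Fin n) R) i i - g.val i i)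
            - (g.val i i - (1 : Matrix (Fin n) (Fin n) R) i i) * c
            - ∑ q ∈ Finset.univ.erase i, g.val i q * y q i := by
          have h1 : (g.val i i - (1 : Matrix (Fin n) (Fin n) R) i i) * c + c
              + ∑ q ∈ Finset.univ.erase i, g.val i q * y q i
              = (1 : Matrix (Fin n) (Fin n) R) i i - g.val i i := by
            rw [← hgii, hsplit, hrow']
          rw [← h1]
          abel
        have hxii : g.val i i - (1 : Matrix (Fin n) (Fin n) R) i i ∈ 𝔪 := hσij _ (hg i i)
        have hc𝔪' : c ∈ 𝔪 := by
          rw [hceq]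
          refine 𝔪.sub_mem (𝔪.sub_mem ?_ ?_) (𝔪.finsetSum_mem _ _ herase)
          · have := 𝔪.neg_mem hxii
            rwa [neg_sub] at this
          · exact 𝔪.mul_mem_right _ _ hxii
        exact hc𝔪 hc𝔪'
      · exact hnP hσij
    · have hij' : i ≠ j := fun h => hiJ (Or.inl h)
      have hb𝔪 : b i j ∈ 𝔪 := hbL i j hiJ (Or.inl rfl)
      have : c = b i j := by
        simp only [hcdef, hydef]
        rw [Matrix.one_apply_ne hij', sub_zero]
      exact hc𝔪 (this ▸ hb𝔪)
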